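/- A point x* ∈ ℝⁿ is a locally optimal solution of the zero-norm minimization problem min { ‖x‖₀ : ‖Ax − b‖ ≤ δ } if and only if (x*, e − sign(|x*|)) is a locally optimal solution of the MPEC problem min { ⟨e, e − v⟩ : ‖Ax − b‖ ≤ δ, ⟨v, |x|⟩ = 0, 0 ≤ v ≤ e } over (x, v) ∈ ℝⁿ × ℝⁿ. -/

import Mathlib

/-- The Euclidean norm of a vector in `ℝᵐ`. -/
noncomputable def enorm {m : ℕ} (u : Fin m → ℝ) : ℝ := Real.sqrt (∑ i, u i ^ 2)

/-- The zero-norm (number of nonzero components) of `x ∈ ℝⁿ`. -/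
noncomputable def zeroNorm {n : ℕ} (x : Fin n → ℝ) : ℕ := (Finset.univ.filter fun i => x i ≠ 0).card

/-- Feasibility for the MPEC problem. -/
noncomputable def MPECFeasible {m n : ℕ} (A : Matrix (Fin m) (Fin n) ℝ) (b : Fin m → ℝ)
    (δ : ℝ) (x v : Fin n → ℝ) : Prop :=
  _root_.enorm (A.mulVec x - b) ≤ δ ∧ (∑ i, v i * |x i|) = 0 ∧ ∀ i, 0 ≤ v i ∧ v i ≤ 1

/-- Each component is bounded by the Euclidean norm. -/
lemma abs_le_enorm {n : ℕ} (u : Fin n → ℝ) (i : Fin n) : |u i| ≤ _root_.enorm u := by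
  have h : u i ^ 2 ≤ ∑ j, u j ^ 2 :=
    Finset.single_le_sum (fun j _ => sq_nonneg (u j)) (Finset.mem_univ i)
  calc |u i| = Real.sqrt (u i ^ 2) := (Real.sqrt_sq_eq_abs _).symm
    _ ≤ Real.sqrt (∑ j, u j ^ 2) := Real.sqrt_le_sqrt h
    _ = _root_.enorm u := rfl

/-- `x*` is a locally optimal solution of `min { ‖x‖₀ : ‖Ax − b‖ ≤ δ }`
iff `(x*, e − sign(|x*|))` is a locally optimal solution of the MPEC problem
`min { ⟨e, e − v⟩ : ‖Ax − b‖ ≤ δ, ⟨v, |x|⟩ = 0, 0 ≤ v ≤ e }`. -/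
theorem local_opt_iff_mpec_local_opt {m n : ℕ} (A : Matrix (Fin m) (Fin n) ℝ)
    (b : Fin m → ℝ) (δ : ℝ) (hδ : 0 ≤ δ) (xs : Fin n → ℝ)
    (vstar : Fin n → ℝ) (hvstar : vstar = fun i => if xs i = 0 then 1 else 0) :
    (_root_.enorm (A.mulVec xs - b) ≤ δ ∧
      ∃ ε > (0 : ℝ), ∀ x : Fin n → ℝ, _root_.enorm (A.mulVec x - b) ≤ δ →
        _root_.enorm (x - xs) < ε → zeroNorm xs ≤ zeroNorm x)
    ↔
    (MPECFeasible A b δ xs vstar ∧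
      ∃ ε > (0 : ℝ), ∀ x v : Fin n → ℝ, MPECFeasible A b δ x v →
        _root_.enorm (x - xs) < ε → _root_.enorm (v - vstar) < ε →
        (∑ i, (1 - vstar i)) ≤ ∑ i, (1 - v i)) := by
  classical
  subst hvstar
  -- choose ε positive and below every nonzero |xs i|
  set s : Finset ℝ :=
    insert 1 ((Finset.univ.filter fun i => xs i ≠ 0).image fun i => |xs i|) with hs
  have hne : s.Nonempty := ⟨1, Finset.mem_insert_self _ _⟩
  set ε := s.min' hne with hε
  have hεpos : 0 < ε := by
    have hmem := s.min'_mem hne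
    simp only [hs, Finset.mem_insert, Finset.mem_image, Finset.mem_filter,
      Finset.mem_univ, true_and] at hmem
    rcases hmem with h | ⟨i, hi, hieq⟩
    · rw [hε, h]; norm_num
    · rw [hε, ← hieq]
      exact abs_pos.2 hi
  have hεle : ∀ i, xs i ≠ 0 → ε ≤ |xs i| := by
    intro i hi
    apply Finset.min'_le
    rw [hs]
    exact Finset.mem_insert_of_mem
      (Finset.mem_image.2 ⟨i, Finset.mem_filter.2 ⟨Finset.mem_univ i, hi⟩, rfl⟩)
  -- support preservation for nearby points
  have hsupp : ∀ x : Fin n → ℝ, _root_.enorm (x - xs) < ε → ∀ i, xs i ≠ 0 → x i ≠ 0 := by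
    intro x hx i hi hxi
    have h1 := abs_le_enorm (x - xs) i
    have h2 : (x - xs) i = x i - xs i := rfl
    rw [h2, hxi, zero_sub, abs_neg] at h1
    have h3 := hεle i hi
    linarith
  constructor
  · rintro ⟨hfeas, -⟩
    refine ⟨⟨hfeas, ?_, ?_⟩, ε, hεpos, ?_⟩
    · apply Finset.sum_eq_zero
      intro i _
      by_cases h : xs i = 0 <;> simp [h]
    · intro i
      by_cases h : xs i = 0 <;> simp [h]
    · rintro x v ⟨-, hxv, hv⟩ hclose -
      have hv0 : ∀ i, x i ≠ 0 → v i = 0 := by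
        intro i hi
        have hz : ∀ j ∈ Finset.univ, 0 ≤ v j * |x j| :=
          fun j _ => mul_nonneg (hv j).1 (abs_nonneg _)
        have h0 := (Finset.sum_eq_zero_iff_of_nonneg hz).1 hxv i (Finset.mem_univ i)
        rcases mul_eq_zero.1 h0 with h | h
        · exact h
        · exact absurd (abs_eq_zero.1 h) hi
      apply Finset.sum_le_sum
      intro i _
      by_cases h : xs i = 0
      · simp only [h, if_pos]
        simp
        exact (hv i).2
      · have hx := hsupp x hclose i h
        simp [h, hv0 i hx]
  · rintro ⟨⟨hfeas, -, -⟩, -⟩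
    refine ⟨hfeas, ε, hεpos, ?_⟩
    intro x _ hclose
    unfold zeroNorm
    apply Finset.card_le_card
    intro i hi
    simp only [Finset.mem_filter, Finset.mem_univ, true_and] at hi ⊢
    exact hsupp x hclose i hi
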